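/- arXiv:1512.01205 — 2 statements merged into one kernel-verified Lean document; each statement's English description precedes it below -/
import Mathlib

section
/- Let $d \geq 3$ be a prime number. Define the $(d-1) \times (d-1)$ integer matrix $M$ (indexed by $i, j \in \{1, \dots, d-1\}$) by: $M_{ij} = -\sum_{r=0}^{i-1} \left(\!\binom{d}{r}\!\right)\left(\!\binom{d}{(j-i)+r}\!\right)$ if $i < j$; $M_{ij} = -\sum_{r=1}^{i-1} \left(\!\binom{d}{r}\!\right)^2$ if $i = j$; and $M_{ij} = -\sum_{r=1}^{j-1} \left(\!\binom{d}{(i-j)+r}\!\right)\left(\!\binom{d}{r}\!\right) + \left(\!\binom{d}{i-j}\!\right)$ if $i > j$. Then $d$ divides every entry $M_{ij}$. -/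
open Finset

/-- The multicombination (multisubset) symbol $\left(\!\binom{d}{r}\!\right) = \binom{d+r-1}{r}$,
regarded as an integer. -/
def multicomb (d r : ℕ) : ℤ := ((d + r - 1).choose r : ℤ)

lemma dvd_multicomb (d r : ℕ) (hd : Nat.Prime d) (h1 : 1 ≤ r) (h2 : r < d) :
    (d : ℤ) ∣ multicomb d r := by
  have : d ∣ (d + r - 1).choose r := by
    apply hd.dvd_choose h2
    · omega
    · omega
  simpa [multicomb] using Int.natCast_dvd_natCast.mpr this

/-- Let `d ≥ 3` be prime, and let `M` be the `(d-1) × (d-1)` integer matrix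
(indexed here by `Fin (d-1)`, corresponding to indices `1, …, d-1` via `i ↦ i.val + 1`) with
`M i j = -∑_{r=0}^{i-1} ((d;r))((d;(j-i)+r))` for `i < j`,
`M i i = -∑_{r=1}^{i-1} ((d;r))²`, and
`M i j = -∑_{r=1}^{j-1} ((d;(i-j)+r))((d;r)) + ((d;i-j))` for `i > j`
(indices `i, j` taken in `{1, …, d-1}`). Then `d` divides every entry of `M`. -/
theorem prime_dvd_matrix_entries (d : ℕ) (hd : Nat.Prime d) (hd3 : 3 ≤ d)
    (M : Matrix (Fin (d - 1)) (Fin (d - 1)) ℤ)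
    (hM : ∀ i j : Fin (d - 1), M i j =
      if (i : ℕ) < (j : ℕ) then
        -∑ r ∈ Finset.range ((i : ℕ) + 1), multicomb d r * multicomb d (((j : ℕ) - (i : ℕ)) + r)
      else if (i : ℕ) = (j : ℕ) then
        -∑ r ∈ Finset.Icc 1 (i : ℕ), (multicomb d r) ^ 2
      else
        -∑ r ∈ Finset.Icc 1 (j : ℕ), multicomb d (((i : ℕ) - (j : ℕ)) + r) * multicomb d r
          + multicomb d ((i : ℕ) - (j : ℕ))) :
    ∀ i j : Fin (d - 1), (d : ℤ) ∣ M i j := by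
  intro i j
  have hi := i.isLt
  have hj := j.isLt
  rw [hM]
  split_ifs with h1 h2
  · apply dvd_neg.mpr
    apply Finset.dvd_sum
    intro r hr
    simp only [Finset.mem_range] at hr
    rcases Nat.eq_zero_or_pos r with h0 | h0
    · subst h0
      exact Dvd.dvd.mul_left (dvd_multicomb d _ hd (by omega) (by omega)) _
    · exact Dvd.dvd.mul_right (dvd_multicomb d r hd h0 (by omega)) _
  · apply dvd_neg.mpr
    apply Finset.dvd_sum
    intro r hr
    simp only [Finset.mem_Icc] at hr
    exact dvd_trans (dvd_multicomb d r hd hr.1 (by omega)) (dvd_pow_self _ two_ne_zero)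
  · apply dvd_add
    · apply dvd_neg.mpr
      apply Finset.dvd_sum
      intro r hr
      simp only [Finset.mem_Icc] at hr
      exact Dvd.dvd.mul_left (dvd_multicomb d r hd hr.1 (by omega)) _
    · exact dvd_multicomb d _ hd (by omega) (by omega)
end

section
/- Let $d \geq 3$ be a prime number and let $M$ be the $(d-1) \times (d-1)$ integer matrix defined by: $M_{ij} = -\sum_{r=0}^{i-1} \left(\!\binom{d}{r}\!\right)\left(\!\binom{d}{(j-i)+r}\!\right)$ if $i < j$; $M_{ij} = -\sum_{r=1}^{i-1} \left(\!\binom{d}{r}\!\right)^2$ if $i = j$; and $M_{ij} = -\sum_{r=1}^{j-1} \left(\!\binom{d}{(i-j)+r}\!\right)\left(\!\binom{d}{r}\!\right) + \left(\!\binom{d}{i-j}\!\right)$ if $i > j$. Then the $(\mathbb{Z}/d)$-linear map $(\mathbb{Z}/d)^{d-1} \to (\mathbb{Z}/d)^{d-1}$ induced by reducing $M$ modulo $d$ is the zero map; in particular its kernel is all of $(\mathbb{Z}/d)^{d-1}$ and its image is trivial, so both its kernel and its cokernel are isomorphic to $\bigoplus_{r=1}^{d-1} \mathbb{Z}/d$.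 -/
open Finset

lemma multicomb_cast_zero (d r : ℕ) (hd : Nat.Prime d) (h1 : 1 ≤ r) (h2 : r ≤ d - 1) :
    ((multicomb d r : ℤ) : ZMod d) = 0 := by
  have hd1 : 1 ≤ d := hd.one_lt.le.trans' (by norm_num)
  have hdvd : d ∣ (d + r - 1).choose r := by
    apply hd.dvd_choose
    · omega
    · omega
    · omega
  unfold multicomb
  have : ((((d + r - 1).choose r : ℤ)) : ZMod d) = (((d + r - 1).choose r : ℕ) : ZMod d) := by
    push_cast; ring
  rw [this, ZMod.natCast_eq_zero_iff]
  exact hdvd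

/-- Let `d ≥ 3` be prime and let `M` be the `(d-1) × (d-1)` integer matrix of the paper
(indexed here by `Fin (d-1)`, corresponding to indices `1, …, d-1` via `i ↦ i.val + 1`).
Then the `ZMod d`-linear map `(ZMod d)^(d-1) → (ZMod d)^(d-1)` induced by reducing `M`
modulo `d` is zero; in particular its kernel is everything and its range is trivial, so
both the kernel and the cokernel are isomorphic to `⊕_{r=1}^{d-1} ZMod d`. -/
theorem matrix_mod_d_zero_map (d : ℕ) (hd : Nat.Prime d) (hd3 : 3 ≤ d)
    (M : Matrix (Fin (d - 1)) (Fin (d - 1)) ℤ)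
    (hM : ∀ i j : Fin (d - 1), M i j =
      if (i : ℕ) < (j : ℕ) then
        -∑ r ∈ Finset.range ((i : ℕ) + 1), multicomb d r * multicomb d (((j : ℕ) - (i : ℕ)) + r)
      else if (i : ℕ) = (j : ℕ) then
        -∑ r ∈ Finset.Icc 1 (i : ℕ), (multicomb d r) ^ 2
      else
        -∑ r ∈ Finset.Icc 1 (j : ℕ), multicomb d (((i : ℕ) - (j : ℕ)) + r) * multicomb d r
          + multicomb d ((i : ℕ) - (j : ℕ))) :
    Matrix.mulVecLin (M.map (Int.cast : ℤ → ZMod d)) = 0 ∧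
    LinearMap.ker (Matrix.mulVecLin (M.map (Int.cast : ℤ → ZMod d))) = ⊤ ∧
    LinearMap.range (Matrix.mulVecLin (M.map (Int.cast : ℤ → ZMod d))) = ⊥ ∧
    Nonempty ((LinearMap.ker (Matrix.mulVecLin (M.map (Int.cast : ℤ → ZMod d))))
      ≃ₗ[ZMod d] (Fin (d - 1) → ZMod d)) ∧
    Nonempty (((Fin (d - 1) → ZMod d) ⧸
        LinearMap.range (Matrix.mulVecLin (M.map (Int.cast : ℤ → ZMod d))))
      ≃ₗ[ZMod d] (Fin (d - 1) → ZMod d)) := by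
  have hzero : M.map (Int.cast : ℤ → ZMod d) = 0 := by
    ext i j
    simp only [Matrix.map_apply, Matrix.zero_apply, hM i j]
    have hi := i.isLt
    have hj := j.isLt
    rcases lt_trichotomy (i : ℕ) (j : ℕ) with h | h | h
    · rw [if_pos h]
      push_cast
      rw [Finset.sum_eq_zero, neg_zero]
      intro r hr
      simp only [Finset.mem_range] at hr
      rcases Nat.eq_zero_or_pos r with hr0 | hr0
      · subst hr0
        rw [multicomb_cast_zero d ((j : ℕ) - (i : ℕ) + 0) hd (by omega) (by omega), mul_zero]
      · rw [multicomb_cast_zero d r hd hr0 (by omega), zero_mul]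
    · rw [if_neg (by omega), if_pos h]
      push_cast
      rw [Finset.sum_eq_zero, neg_zero]
      intro r hr
      simp only [Finset.mem_Icc] at hr
      rw [multicomb_cast_zero d r hd hr.1 (by omega)]
      ring
    · rw [if_neg (by omega), if_neg (by omega)]
      push_cast
      rw [Finset.sum_eq_zero, multicomb_cast_zero d ((i : ℕ) - (j : ℕ)) hd (by omega) (by omega),
        neg_zero, zero_add]
      intro r hr
      simp only [Finset.mem_Icc] at hr
      rw [multicomb_cast_zero d r hd hr.1 (by omega), mul_zero]
  have hmap : Matrix.mulVecLin (M.map (Int.cast : ℤ → ZMod d)) = 0 := by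
    rw [hzero, Matrix.mulVecLin_zero]
  have hker : LinearMap.ker (Matrix.mulVecLin (M.map (Int.cast : ℤ → ZMod d))) = ⊤ := by
    rw [hmap]; exact LinearMap.ker_zero
  have hrange : LinearMap.range (Matrix.mulVecLin (M.map (Int.cast : ℤ → ZMod d))) = ⊥ := by
    rw [hmap]; exact LinearMap.range_zero
  exact ⟨hmap, hker, hrange,
    ⟨(LinearEquiv.ofEq _ _ hker).trans (Submodule.topEquiv)⟩,
    ⟨Submodule.quotEquivOfEqBot _ hrange⟩⟩
end
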